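/- (Generalised interpolation bound on f_2, Appendix C.) For every integer J ≥ 1 and all real u, u_* with 0 ≤ u ≤ u_* and u_* > 0, f_2(u) ≤ 1/2 + (u/u_*)(f_2(u_*) − 1/2) − (u/u_*) Σ_{j=0}^{J−1} (u_*^{j+2}/(j+4)!) (1 − u^{j+1}/u_*^{j+1}) − (u/u_*)(1 − u^{J+1}/u_*^{J+1}) u_*^{J+2} f_{J+4}(u_*). -/

import Mathlib

open Real Finset

/-- `f k u = ∑_{j=0}^∞ u^j / (j+k)!`. -/
noncomputable def fSeries (k : ℕ) (u : ℝ) : ℝ := ∑' j : ℕ, u ^ j / (Nat.factorial (j + k) : ℝ)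

lemma summable_fS (k : ℕ) (u : ℝ) :
    Summable (fun j : ℕ => u ^ j / (Nat.factorial (j + k) : ℝ)) := by
  refine Summable.of_norm_bounded (Real.summable_pow_div_factorial |u|) ?_
  intro n
  rw [norm_div, norm_pow, Real.norm_eq_abs, Real.norm_eq_abs, Nat.abs_cast]
  have h1 : (0:ℝ) < n.factorial := by exact_mod_cast Nat.factorial_pos n
  have h2 : (n.factorial : ℝ) ≤ ((n+k).factorial : ℝ) := by
    exact_mod_cast Nat.factorial_le (Nat.le_add_right n k)
  exact div_le_div_of_nonneg_left (by positivity) h1 h2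

lemma summable_shift (v : ℝ) :
    Summable (fun j : ℕ => v ^ (j+1) / (Nat.factorial (j + 3) : ℝ)) := by
  have := (summable_fS 3 v).mul_left v
  convert this using 2 with j
  · rfl
  rw [pow_succ]
  ring

lemma fS_split (v : ℝ) :
    fSeries 2 v = 1/2 + ∑' j : ℕ, v ^ (j+1) / (Nat.factorial (j + 3) : ℝ) := by
  have h := (summable_fS 2 v).tsum_eq_zero_add
  rw [fSeries, h]
  norm_num [Nat.factorial]

/-- **Generalised interpolation bound on `f₂`** (Appendix C). For every integer `J ≥ 1`
and `0 ≤ u ≤ u✶` with `u✶ > 0`,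
`f₂(u) ≤ 1/2 + (u/u✶)(f₂(u✶) − 1/2) − (u/u✶) ∑_{j=0}^{J−1} (u✶^{j+2}/(j+4)!)(1 − u^{j+1}/u✶^{j+1})
 − (u/u✶)(1 − u^{J+1}/u✶^{J+1}) u✶^{J+2} f_{J+4}(u✶)`. -/
theorem f_two_interpolation_bound_general
    (J : ℕ) (hJ : 1 ≤ J) (u ustar : ℝ) (hu : 0 ≤ u) (huu : u ≤ ustar) (hustar : 0 < ustar) :
    fSeries 2 u ≤ 1 / 2 + (u / ustar) * (fSeries 2 ustar - 1 / 2) -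
      (u / ustar) * ∑ j ∈ Finset.range J,
        (ustar ^ (j + 2) / (Nat.factorial (j + 4) : ℝ)) * (1 - u ^ (j + 1) / ustar ^ (j + 1)) -
      (u / ustar) * (1 - u ^ (J + 1) / ustar ^ (J + 1)) * ustar ^ (J + 2) *
        fSeries (J + 4) ustar := by
  have hne : ustar ≠ 0 := ne_of_gt hustar
  set t := u / ustar with ht_def
  have hu_eq : u = t * ustar := (div_mul_cancel₀ u hne).symm
  have ht0 : 0 ≤ t := div_nonneg hu hustar.le
  have ht1 : t ≤ 1 := (div_le_one hustar).2 huu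
  have htpow : ∀ n : ℕ, u ^ n / ustar ^ n = t ^ n := fun n => (div_pow u ustar n).symm
  -- the difference series
  set c : ℕ → ℝ := fun j => t * (ustar ^ (j+1) / (Nat.factorial (j + 3) : ℝ))
      - u ^ (j+1) / (Nat.factorial (j + 3) : ℝ) with hc_def
  have hc_sum : Summable c := ((summable_shift ustar).mul_left t).sub (summable_shift u)
  have hc_eq : ∀ j : ℕ, c j = t * (1 - t ^ j) * (ustar ^ (j+1) / (Nat.factorial (j + 3) : ℝ)) := by
    intro j
    simp only [hc_def, hu_eq, mul_pow]
    ring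
  have hc_tsum : ∑' j, c j = t * (∑' j : ℕ, ustar ^ (j+1) / (Nat.factorial (j + 3) : ℝ))
      - ∑' j : ℕ, u ^ (j+1) / (Nat.factorial (j + 3) : ℝ) := by
    rw [← tsum_mul_left]
    exact ((summable_shift ustar).mul_left t).tsum_sub (summable_shift u)
  -- split at J+1
  have hsplit := (hc_sum.sum_add_tsum_nat_add (J+1)).symm
  -- finite part
  have hfin : ∑ i ∈ Finset.range (J+1), c i =
      t * ∑ j ∈ Finset.range J,
        (ustar ^ (j + 2) / (Nat.factorial (j + 4) : ℝ)) * (1 - u ^ (j + 1) / ustar ^ (j + 1)) := by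
    rw [Finset.sum_range_succ', Finset.mul_sum]
    have h0 : c 0 = 0 := by rw [hc_eq]; ring
    rw [h0, add_zero]
    refine Finset.sum_congr rfl fun i _ => ?_
    rw [hc_eq, htpow]
    push_cast [show i + 1 + 3 = i + 4 from rfl]
    ring
  -- tail part
  have htail : t * (1 - t ^ (J + 1)) * ustar ^ (J + 2) * fSeries (J + 4) ustar
      ≤ ∑' n : ℕ, c (n + (J+1)) := by
    rw [fSeries, ← tsum_mul_left]
    refine Summable.tsum_le_tsum ?_ ((summable_fS (J+4) ustar).mul_left _)
      ((summable_nat_add_iff (J+1)).2 hc_sum)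
    intro n
    rw [hc_eq]
    have hfac : ((n + (J+1)) + 3 : ℕ) = n + (J + 4) := by omega
    rw [hfac]
    have hposf : (0:ℝ) < ((n + (J+4)).factorial : ℝ) := by exact_mod_cast Nat.factorial_pos _
    have hpowle : t ^ (n + (J+1)) ≤ t ^ (J+1) :=
      pow_le_pow_of_le_one ht0 ht1 (by omega)
    have hpe : ustar ^ ((n + (J+1)) + 1) = ustar ^ (J+2) * ustar ^ n := by
      rw [← pow_add]; ring_nf
    rw [hpe]
    have h1 : (0:ℝ) ≤ ustar ^ (J+2) * ustar ^ n / ((n + (J+4)).factorial : ℝ) := by positivity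
    calc t * (1 - t ^ (J + 1)) * ustar ^ (J + 2) * (ustar ^ n / ((n + (J+4)).factorial : ℝ))
        ≤ t * (1 - t ^ (n + (J + 1))) * ustar ^ (J + 2) * (ustar ^ n / ((n + (J+4)).factorial : ℝ)) := by
          apply mul_le_mul_of_nonneg_right _ (by positivity)
          apply mul_le_mul_of_nonneg_right _ (by positivity)
          apply mul_le_mul_of_nonneg_left _ ht0
          linarith
      _ = t * (1 - t ^ (n + (J + 1))) * (ustar ^ (J+2) * ustar ^ n / ((n + (J+4)).factorial : ℝ)) := by
          ring
  -- assemble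
  rw [fS_split u, fS_split ustar]
  have hkey : t * ∑ j ∈ Finset.range J,
        (ustar ^ (j + 2) / (Nat.factorial (j + 4) : ℝ)) * (1 - u ^ (j + 1) / ustar ^ (j + 1))
      + t * (1 - u ^ (J + 1) / ustar ^ (J + 1)) * ustar ^ (J + 2) * fSeries (J + 4) ustar
      ≤ ∑' j, c j := by
    rw [hsplit, htpow]
    exact add_le_add hfin.ge htail
  rw [hc_tsum] at hkey
  linarith
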